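/- Let v, w ∈ ℤ² be primitive vectors with ε = det(v, w) ≠ 0, let x be the unique non-negative integer less than |ε| such that P = (v, w)·[[1, −x],[0, |ε|]]^{−1} is a unimodular integer matrix, and (when |ε| ≥ 2) let |ε|/x = n_1 − 1/(n_2 − 1/(⋯ − 1/n_l)), all n_j ≥ 2, be the Hirzebruch–Jung continued fraction (with l = 0 when |ε| = 1). Define w_j = P·[[0,−1],[1,n_1]]⋯[[0,−1],[1,n_j]]·(1,0)ᵀ for 0 ≤ j ≤ l and w_{l+1} = P·[[0,−1],[1,n_1]]⋯[[0,−1],[1,n_l]]·(0,1)ᵀ. Then w_0 = v, w_{l+1} = w, and det(w_j, w_{j+1}) = ε/|ε| ∈ {+1, −1} for every j = 0, …, l; in particular the sequence w_0, w_1, …, w_{l+1} is unimodular. -/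

import Mathlib

/-- determinant of the 2×2 matrix with columns `v` and `w` -/
def det2 (v w : Fin 2 → ℤ) : ℤ := v 0 * w 1 - v 1 * w 0

/-- the 2×2 matrix with columns `v` and `w` -/
def colMat (v w : Fin 2 → ℤ) : Matrix (Fin 2) (Fin 2) ℤ := !![v 0, w 0; v 1, w 1]

/-- a 2×2 integer matrix is unimodular if its determinant is `±1` -/
def Unimod (A : Matrix (Fin 2) (Fin 2) ℤ) : Prop := A.det = 1 ∨ A.det = -1

/-- a vector of `ℤ²` is primitive if its components are relatively prime -/
def Primitive (v : Fin 2 → ℤ) : Prop := Int.gcd (v 0) (v 1) = 1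

/-- value of the Hirzebruch–Jung continued fraction `n₁ - 1/(n₂ - 1/(⋯ - 1/n_l))` -/
def hjEval : List ℤ → ℚ
  | [] => 0
  | n :: ns => (n : ℚ) - 1 / hjEval ns

/-- The vectors `w_j` of (4.2): for `0 ≤ j ≤ l`,
`w_j = P·[[0,-1],[1,n₁]]⋯[[0,-1],[1,n_j]]·(1,0)ᵀ`, and for `j = l + 1`,
`w_{l+1} = P·[[0,-1],[1,n₁]]⋯[[0,-1],[1,n_l]]·(0,1)ᵀ`. -/
def chainVec (P : Matrix (Fin 2) (Fin 2) ℤ) (ns : List ℤ) (j : ℕ) : Fin 2 → ℤ :=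
  if j ≤ ns.length then
    (P * ((ns.take j).map fun n => !![0, -1; 1, n]).prod).mulVec ![1, 0]
  else
    (P * (ns.map fun n => !![0, -1; 1, n]).prod).mulVec ![0, 1]

lemma hj_gt_one : ∀ ns : List ℤ, ns ≠ [] → (∀ n ∈ ns, 2 ≤ n) → 1 < hjEval ns := by
  intro ns
  induction ns with
  | nil => simp
  | cons n t ih =>
    intro _ h
    have hn : 2 ≤ n := h n List.mem_cons_self
    rcases eq_or_ne t [] with rfl | ht
    · simp [hjEval]
      have : (2:ℚ) ≤ (n:ℚ) := by exact_mod_cast hn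
      linarith
    · have h1 : 1 < hjEval t := ih ht (fun m hm => h m (List.mem_cons_of_mem _ hm))
      have h2 : 0 < 1 / hjEval t := by positivity
      have h3 : 1 / hjEval t < 1 := by
        rw [div_lt_one (by linarith)]; linarith
      have : (2:ℚ) ≤ (n:ℚ) := by exact_mod_cast hn
      simp only [hjEval]
      linarith

lemma cf_key : ∀ (ns : List ℤ) (a b : ℤ), (∀ n ∈ ns, 2 ≤ n) → 0 < b → b < a →
    Int.gcd a b = 1 → hjEval ns = (a:ℚ)/(b:ℚ) →
    ((ns.map fun n => !![0,-1;1,n]).prod).mulVec ![0,1] = ![-b, a] := by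
  intro ns
  induction ns with
  | nil =>
    intro a b _ hb hba _ hval
    exfalso
    have hb' : (0:ℚ) < (b:ℚ) := by exact_mod_cast hb
    have ha' : (b:ℚ) < (a:ℚ) := by exact_mod_cast hba
    have : (a:ℚ)/(b:ℚ) > 0 := div_pos (by linarith) hb'
    rw [hjEval] at hval
    linarith [hval]
  | cons n t ih =>
    intro a b hmem hb hba hgcd hval
    have hbQ : (0:ℚ) < (b:ℚ) := by exact_mod_cast hb
    rcases eq_or_ne t [] with rfl | ht
    · -- hjEval [n] = n, so a/b = n, b = 1, a = n
      have hv : (a:ℚ)/(b:ℚ) = (n:ℚ) := by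
        rw [← hval]; simp [hjEval]
      have hab : (a:ℚ) = (n:ℚ) * b := by
        field_simp at hv; linarith [hv]
      have habZ : a = n * b := by exact_mod_cast hab
      have hdvd : b ∣ a := ⟨n, by linarith [habZ]⟩
      have : b.natAbs ∣ Int.gcd a b := Nat.dvd_gcd (Int.natAbs_dvd_natAbs.mpr hdvd) dvd_rfl
      rw [hgcd] at this
      have hb1 : b = 1 := by
        have := Nat.eq_one_of_dvd_one this
        omega
      subst hb1
      have ha : a = n := by omega
      subst ha
      funext i
      fin_cases i <;>
        simp [Matrix.mulVec, dotProduct, Fin.sum_univ_two]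
    · have h1 : 1 < hjEval t := hj_gt_one t ht (fun m hm => hmem m (List.mem_cons_of_mem _ hm))
      have hq0 : hjEval t ≠ 0 := by linarith
      have hvn : (n:ℚ) - 1 / hjEval t = (a:ℚ)/(b:ℚ) := by rw [← hval]; rfl
      -- 1/hjEval t = (n*b - a)/b
      have hkey : 1 / hjEval t = ((n*b - a : ℤ) : ℚ) / (b:ℚ) := by
        push_cast
        field_simp at hvn ⊢
        linarith [hvn]
      have hpos : (0:ℚ) < ((n*b - a : ℤ):ℚ) / b := by
        rw [← hkey]; positivity
      have hlt1 : ((n*b - a : ℤ):ℚ) / b < 1 := by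
        rw [← hkey, div_lt_one (by linarith)]; linarith
      have hb2 : (0:ℤ) < n*b - a := by
        have : (0:ℚ) < ((n*b-a:ℤ):ℚ) := by
          by_contra hc
          push_neg at hc
          have : ((n*b-a:ℤ):ℚ)/b ≤ 0 := div_nonpos_of_nonpos_of_nonneg hc (le_of_lt hbQ)
          linarith
        exact_mod_cast this
      have hba2 : n*b - a < b := by
        have : ((n*b-a:ℤ):ℚ) < (b:ℚ) := by
          rw [div_lt_one hbQ] at hlt1; exact hlt1
        exact_mod_cast this
      have hgcd2 : Int.gcd b (n*b - a) = 1 := by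
        have hd : (Int.gcd b (n*b-a) : ℤ) ∣ a := by
          have d1 : (Int.gcd b (n*b-a) : ℤ) ∣ b := Int.gcd_dvd_left _ _
          have d2 : (Int.gcd b (n*b-a) : ℤ) ∣ (n*b - a) := Int.gcd_dvd_right _ _
          have : (Int.gcd b (n*b-a) : ℤ) ∣ n*b - (n*b - a) := dvd_sub (Dvd.dvd.mul_left d1 n) d2
          simpa using this
        have : (Int.gcd b (n*b-a) : ℤ) ∣ (Int.gcd a b : ℤ) :=
          Int.dvd_coe_gcd hd (Int.gcd_dvd_left _ _)
        rw [hgcd] at this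
        exact_mod_cast Int.eq_one_of_dvd_one (by positivity) this
      have hvt : hjEval t = ((b:ℤ):ℚ) / ((n*b - a : ℤ):ℚ) := by
        have hnbQ : ((n*b-a:ℤ):ℚ) ≠ 0 := by
          exact_mod_cast hb2.ne'
        rw [eq_div_iff hnbQ]
        have h := hkey
        field_simp at h
        push_cast at h ⊢
        linear_combination -h
      have hrec := ih b (n*b - a) (fun m hm => hmem m (List.mem_cons_of_mem _ hm))
        hb2 hba2 hgcd2 hvt
      rw [List.map_cons, List.prod_cons, ← Matrix.mulVec_mulVec, hrec]
      funext i
      fin_cases i <;>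
        simp [Matrix.mulVec, dotProduct, Fin.sum_univ_two] <;> ring

section MainProof

lemma det2_cols (A : Matrix (Fin 2) (Fin 2) ℤ) :
    det2 (A.mulVec ![1,0]) (A.mulVec ![0,1]) = A.det := by
  simp [det2, Matrix.mulVec, dotProduct, Fin.sum_univ_two, Matrix.det_fin_two, Matrix.vecHead, Matrix.vecTail]
  ring

lemma detprod (ns : List ℤ) : ((ns.map fun n => !![0,-1;1,n]).prod).det = 1 := by
  induction ns with
  | nil => simp
  | cons n t ih =>
    rw [List.map_cons, List.prod_cons, Matrix.det_mul, ih]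
    simp [Matrix.det_fin_two_of]

end MainProof

/-- The sequence `w_0 = v, w_1, …, w_{l+1} = w` obtained from the Hirzebruch–Jung
expansion of `|ε|/x` is unimodular, with all consecutive determinants equal to
`ε/|ε| ∈ {±1}`. -/
theorem chain_is_unimodular (v w : Fin 2 → ℤ) (hv : Primitive v) (hw : Primitive w)
    (hε : det2 v w ≠ 0)
    (x : ℤ) (hx0 : 0 ≤ x) (hx1 : x < |det2 v w|)
    (P : Matrix (Fin 2) (Fin 2) ℤ)
    (hP : Unimod P) (hPeq : P * !![1, -x; 0, |det2 v w|] = colMat v w)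
    (ns : List ℤ)
    (hns1 : |det2 v w| = 1 → ns = [])
    (hns2 : 2 ≤ |det2 v w| → (∀ n ∈ ns, 2 ≤ n) ∧
      hjEval ns = ((|det2 v w| : ℤ) : ℚ) / (x : ℚ)) :
    chainVec P ns 0 = v ∧ chainVec P ns (ns.length + 1) = w ∧
    (det2 v w / |det2 v w| = 1 ∨ det2 v w / |det2 v w| = -1) ∧
    ∀ j ≤ ns.length,
      det2 (chainVec P ns j) (chainVec P ns (j + 1)) = det2 v w / |det2 v w| := by
  set ε := det2 v w with hεdef
  set δ := |ε| with hδdef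
  have hδ : 0 < δ := abs_pos.mpr hε
  -- v and w in terms of P
  have hv' : P.mulVec ![1,0] = v := by
    have h := congrArg (fun A => Matrix.mulVec A ![1,0]) hPeq
    rw [← Matrix.mulVec_mulVec] at h
    have hT : (!![1, -x; 0, δ]).mulVec ![1,0] = ![1,0] := by
      funext i; fin_cases i <;> simp [Matrix.mulVec, dotProduct, Fin.sum_univ_two]
    rw [hT] at h
    rw [h]
    funext i; fin_cases i <;> simp [colMat, Matrix.mulVec, dotProduct, Fin.sum_univ_two]
  have hw' : P.mulVec ![-x, δ] = w := by
    have h := congrArg (fun A => Matrix.mulVec A ![0,1]) hPeq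
    rw [← Matrix.mulVec_mulVec] at h
    have hT : (!![1, -x; 0, δ]).mulVec ![0,1] = ![-x, δ] := by
      funext i; fin_cases i <;> simp [Matrix.mulVec, dotProduct, Fin.sum_univ_two]
    rw [hT] at h
    rw [h]
    funext i; fin_cases i <;> simp [colMat, Matrix.mulVec, dotProduct, Fin.sum_univ_two]
  -- determinant of P
  have hdetP : P.det * δ = ε := by
    have h := congrArg Matrix.det hPeq
    rw [Matrix.det_mul] at h
    have hT : (!![1, -x; 0, δ]).det = δ := by simp [Matrix.det_fin_two_of]
    have hC : (colMat v w).det = ε := by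
      simp [colMat, Matrix.det_fin_two_of, hεdef, det2]; ring
    rw [hT, hC] at h
    exact h
  have hsign : ε / δ = P.det := by
    rw [← hdetP]
    exact Int.mul_ediv_cancel _ hδ.ne'
  -- the key fact: M.mulVec ![0,1] = ![-x, δ]
  have hM : ((ns.map fun n => !![0,-1;1,n]).prod).mulVec ![0,1] = ![-x, δ] := by
    rcases eq_or_lt_of_le (show (1:ℤ) ≤ δ by omega) with h1 | h2
    · -- δ = 1
      have hδ1 : δ = 1 := h1.symm
      have hns : ns = [] := hns1 hδ1
      have hx : x = 0 := by omega
      subst hns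
      funext i; fin_cases i <;> simp [Matrix.mulVec, dotProduct, Fin.sum_univ_two, hx, hδ1]
    · have hδ2 : 2 ≤ δ := h2
      obtain ⟨hmem, hval⟩ := hns2 hδ2
      -- gcd δ x = 1
      have hgcd : Int.gcd δ x = 1 := by
        have d1 : (Int.gcd δ x : ℤ) ∣ w 0 := by
          rw [← hw']
          have : (P.mulVec ![-x, δ]) 0 = P 0 0 * (-x) + P 0 1 * δ := by
            simp [Matrix.mulVec, dotProduct, Fin.sum_univ_two]
          rw [this]
          exact dvd_add (((Int.gcd_dvd_right _ _).neg_right).mul_left _)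
            ((Int.gcd_dvd_left _ _).mul_left _)
        have d2 : (Int.gcd δ x : ℤ) ∣ w 1 := by
          rw [← hw']
          have : (P.mulVec ![-x, δ]) 1 = P 1 0 * (-x) + P 1 1 * δ := by
            simp [Matrix.mulVec, dotProduct, Fin.sum_univ_two]
          rw [this]
          exact dvd_add (((Int.gcd_dvd_right _ _).neg_right).mul_left _)
            ((Int.gcd_dvd_left _ _).mul_left _)
        have : (Int.gcd δ x : ℤ) ∣ (Int.gcd (w 0) (w 1) : ℤ) := Int.dvd_coe_gcd d1 d2
        rw [hw] at this
        exact_mod_cast Int.eq_one_of_dvd_one (by positivity) this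
      have hxpos : 0 < x := by
        rcases eq_or_lt_of_le hx0 with h | h
        · exfalso
          rw [← h] at hgcd
          simp [Int.gcd] at hgcd
          omega
        · exact h
      exact cf_key ns δ x hmem hxpos hx1 hgcd hval
  refine ⟨?_, ?_, ?_, ?_⟩
  · -- w_0 = v
    rw [chainVec, if_pos (Nat.zero_le _)]
    simpa using hv'
  · -- w_{l+1} = w
    rw [chainVec, if_neg (by omega)]
    rw [← Matrix.mulVec_mulVec, hM]
    exact hw'
  · rw [hsign]; exact hP
  · intro j hj
    rcases eq_or_lt_of_le hj with hjl | hjl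
    · -- j = ns.length
      rw [chainVec, chainVec, if_pos hj, if_neg (by omega), hjl, List.take_length]
      rw [det2_cols, Matrix.det_mul, detprod, mul_one, hsign]
    · -- j < ns.length
      rw [chainVec, chainVec, if_pos hj, if_pos (by omega)]
      have htake : (ns.take (j+1)).map (fun n => !![0,-1;1,n]) =
          ((ns.take j).map fun n => !![0,-1;1,n]) ++ [!![0,-1;1, ns.get ⟨j, hjl⟩]] := by
        simp only [List.take_succ, List.map_append]
        rw [List.getElem?_eq_getElem hjl]
        rfl
      rw [htake, List.prod_append, List.prod_cons, List.prod_nil, mul_one, ← mul_assoc]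
      have hB : (!![0,-1;1, ns.get ⟨j, hjl⟩]).mulVec ![1,0] = ![0,1] := by
        funext i; fin_cases i <;> simp [Matrix.mulVec, dotProduct, Fin.sum_univ_two]
      have hstep : (P * ((ns.take j).map fun n => !![0,-1;1,n]).prod *
          !![0,-1;1, ns.get ⟨j, hjl⟩]).mulVec ![1,0] =
          (P * ((ns.take j).map fun n => !![0,-1;1,n]).prod).mulVec ![0,1] := by
        rw [← Matrix.mulVec_mulVec, hB]
      rw [hstep, det2_cols, Matrix.det_mul, detprod, mul_one, hsign]
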